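/- Assume the multigraph is connected. Let W be a (λ_S+1) class, let s ∈ S ∩ W and u ∈ W, and let C0, C1, C2 be pairwise distinct nearest (λ_S+1) cuts of u containing s. If some vertex of W lies outside C0 ∪ C1 ∪ C2, then there exists an index i ∈ {0,1,2} such that no vertex of W lies in Cᵢᶜ ∩ C_{(i+1) mod 3} ∩ C_{(i+2) mod 3}. -/

import Mathlib

open Finset

namespace Paper

variable {α : Type*} [Fintype α] [DecidableEq α]

/-- Capacity of a cut `A` in an undirected multigraph with edge multiplicities `w`. -/
def cutCap (w : α → α → ℕ) (A : Finset α) : ℕ := ∑ u ∈ A, ∑ v ∈ Aᶜ, w u v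

/-- `C` is a Steiner cut for the Steiner set `S`. -/
def IsSteinerCut (S C : Finset α) : Prop := (C ∩ S).Nonempty ∧ (S \ C).Nonempty

/-- `C` is an `S`-mincut: a Steiner cut of capacity `lam = λ_S`. -/
def IsSMincut (w : α → α → ℕ) (S : Finset α) (lam : ℕ) (C : Finset α) : Prop :=
  IsSteinerCut S C ∧ cutCap w C = lam

/-- `C` is a `(λ_S+1)` cut: a Steiner cut of capacity `lam + 1`. -/
def IsPlusOneCut (w : α → α → ℕ) (S : Finset α) (lam : ℕ) (C : Finset α) : Prop :=
  IsSteinerCut S C ∧ cutCap w C = lam + 1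

/-- A cut `C` separates `u` and `v`: exactly one of them lies in `C`. -/
def Separates (C : Finset α) (u v : α) : Prop := (u ∈ C ∧ v ∉ C) ∨ (v ∈ C ∧ u ∉ C)

/-- `W` is a `(λ_S+1)` class: an equivalence class of the relation relating `u,v`
iff no `S`-mincut separates them. -/
def IsClass (w : α → α → ℕ) (S : Finset α) (lam : ℕ) (W : Finset α) : Prop :=
  ∃ u0 : α, ∀ v : α, v ∈ W ↔ ∀ C : Finset α, IsSMincut w S lam C → ¬ Separates C u0 v

/-- `C` is a nearest `(λ_S+1)` cut of `u` containing the Steiner vertex `s`. -/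
def IsNearestPlusOneCut (w : α → α → ℕ) (S : Finset α) (lam : ℕ) (s u : α)
    (C : Finset α) : Prop :=
  IsPlusOneCut w S lam C ∧ s ∈ C ∧ u ∈ C ∧
    ∀ C' : Finset α, IsPlusOneCut w S lam C' → s ∈ C' → u ∈ C' → ¬ C' ⊂ C

/-- A cut `C` subdivides a set `X`. -/
def Subdivides (C X : Finset α) : Prop := (X ∩ C).Nonempty ∧ (X \ C).Nonempty
set_option linter.unusedSectionVars false
set_option linter.unusedVariables false

def dd (w : α → α → ℕ) (X Y : Finset α) : ℕ := ∑ x ∈ X, ∑ y ∈ Y, w x y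
lemma dd_comm (w : α → α → ℕ) (hsym : ∀ u v, w u v = w v u) (X Y : Finset α) :
    dd w X Y = dd w Y X := by
  rw [dd, dd, Finset.sum_comm]
  exact Finset.sum_congr rfl fun y _ => Finset.sum_congr rfl fun x _ => hsym x y
lemma dd_union_left (w : α → α → ℕ) {X X' : Finset α} (Y : Finset α) (h : Disjoint X X') :
    dd w (X ∪ X') Y = dd w X Y + dd w X' Y := Finset.sum_union h
lemma dd_union_right (w : α → α → ℕ) (X : Finset α) {Y Y' : Finset α} (h : Disjoint Y Y') :
    dd w X (Y ∪ Y') = dd w X (Y) + dd w X Y' := by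
  simp only [dd, Finset.sum_union h, Finset.sum_add_distrib]
lemma dd_eq_zero_iff (w : α → α → ℕ) (X Y : Finset α) :
    dd w X Y = 0 ↔ ∀ x ∈ X, ∀ y ∈ Y, w x y = 0 := by
  simp [dd, Finset.sum_eq_zero_iff]
lemma cutCap_eq_dd (w : α → α → ℕ) (A : Finset α) : cutCap w A = dd w A Aᶜ := rfl
lemma cutCap_compl (w : α → α → ℕ) (hsym : ∀ u v, w u v = w v u) (A : Finset α) :
    cutCap w Aᶜ = cutCap w A := by
  rw [cutCap_eq_dd, cutCap_eq_dd, compl_compl, dd_comm w hsym]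
lemma cap_disj (w : α → α → ℕ) (hsym : ∀ u v, w u v = w v u) {A B : Finset α}
    (h : Disjoint A B) :
    cutCap w A + cutCap w B = cutCap w (A ∪ B) + 2 * dd w A B := by
  have hA : Aᶜ = B ∪ (A ∪ B)ᶜ := by
    ext x
    have : x ∈ A → x ∉ B := fun hx => Finset.disjoint_left.mp h hx
    simp only [Finset.mem_compl, Finset.mem_union]
    tauto
  have hB : Bᶜ = A ∪ (A ∪ B)ᶜ := by
    ext x
    have : x ∈ A → x ∉ B := fun hx => Finset.disjoint_left.mp h hx
    simp only [Finset.mem_compl, Finset.mem_union]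
    tauto
  have dA : Disjoint B ((A ∪ B)ᶜ) := by
    rw [Finset.disjoint_left]; intro x hx; simp [Finset.mem_compl]; tauto
  have dB : Disjoint A ((A ∪ B)ᶜ) := by
    rw [Finset.disjoint_left]; intro x hx; simp [Finset.mem_compl]; tauto
  rw [cutCap_eq_dd, cutCap_eq_dd, cutCap_eq_dd, hA, hB,
    dd_union_right w A dA, dd_union_right w B dB, dd_union_left w _ h,
    dd_comm w hsym B A]
  ring

lemma cap_submod (w : α → α → ℕ) (hsym : ∀ u v, w u v = w v u) (A B : Finset α) :
    cutCap w (A ∪ B) + cutCap w (A ∩ B) ≤ cutCap w A + cutCap w B := by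
  have e1 : A ∩ B ∪ B \ A = B := by ext x; simp only [Finset.mem_union, Finset.mem_inter, Finset.mem_sdiff]; tauto
  have d1 : Disjoint (A ∩ B) (B \ A) := by
    rw [Finset.disjoint_left]; intro x hx; simp_all [Finset.mem_inter, Finset.mem_sdiff]
  have e2 : A ∪ B \ A = A ∪ B := by ext x; simp only [Finset.mem_union, Finset.mem_sdiff]; tauto
  have d2 : Disjoint A (B \ A) := by
    rw [Finset.disjoint_left]; intro x hx; simp_all [Finset.mem_sdiff]
  have h1 := cap_disj w hsym d1
  have h2 := cap_disj w hsym d2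
  rw [e1] at h1
  rw [e2] at h2
  have e3 : A ∩ B ∪ A \ B = A := by ext x; simp only [Finset.mem_union, Finset.mem_inter, Finset.mem_sdiff]; tauto
  have d3 : Disjoint (A ∩ B) (A \ B) := by
    rw [Finset.disjoint_left]; intro x hx; simp_all [Finset.mem_inter, Finset.mem_sdiff]
  have h3 : dd w A (B \ A) = dd w (A ∩ B) (B \ A) + dd w (A \ B) (B \ A) := by
    rw [← dd_union_left w _ d3, e3]
  omega

lemma cap_posimod (w : α → α → ℕ) (hsym : ∀ u v, w u v = w v u) (A B : Finset α) :
    cutCap w (A \ B) + cutCap w (B \ A) + 2 * dd w (A ∩ B) ((A ∪ B)ᶜ)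
      = cutCap w A + cutCap w B := by
  have e1 : A ∩ B ∪ A \ B = A := by ext x; simp only [Finset.mem_union, Finset.mem_inter, Finset.mem_sdiff]; tauto
  have d1 : Disjoint (A ∩ B) (A \ B) := by
    rw [Finset.disjoint_left]; intro x hx; simp_all [Finset.mem_inter, Finset.mem_sdiff]
  have e2 : A ∩ B ∪ B \ A = B := by ext x; simp only [Finset.mem_union, Finset.mem_inter, Finset.mem_sdiff]; tauto
  have d2 : Disjoint (A ∩ B) (B \ A) := by
    rw [Finset.disjoint_left]; intro x hx; simp_all [Finset.mem_inter, Finset.mem_sdiff]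
  have h1 := cap_disj w hsym d1
  have h2 := cap_disj w hsym d2
  rw [e1] at h1
  rw [e2] at h2
  have e3 : (A ∩ B)ᶜ = (A \ B) ∪ ((B \ A) ∪ (A ∪ B)ᶜ) := by
    ext x; simp only [Finset.mem_compl, Finset.mem_union, Finset.mem_sdiff, Finset.mem_inter]; tauto
  have d3 : Disjoint (B \ A) ((A ∪ B)ᶜ) := by
    rw [Finset.disjoint_left]; intro x hx; simp_all [Finset.mem_compl, Finset.mem_sdiff]
  have d4 : Disjoint (A \ B) ((B \ A) ∪ (A ∪ B)ᶜ) := by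
    rw [Finset.disjoint_left]; intro x hx
    simp_all [Finset.mem_compl, Finset.mem_sdiff, Finset.mem_union]
  have h3 : cutCap w (A ∩ B) = dd w (A ∩ B) (A \ B) + (dd w (A ∩ B) (B \ A) + dd w (A ∩ B) ((A ∪ B)ᶜ)) := by
    rw [cutCap_eq_dd, e3, dd_union_right w _ d4, dd_union_right w _ d3]
  omega


lemma class_nonsep {w : α → α → ℕ} {S : Finset α} {lam : ℕ} {W : Finset α}
    (hW : IsClass w S lam W) {x y : α} (hx : x ∈ W) (hy : y ∈ W)
    {C : Finset α} (hC : IsSMincut w S lam C) : ¬ Separates C x y := by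
  obtain ⟨u0, h⟩ := hW
  have hx' := (h x).mp hx C hC
  have hy' := (h y).mp hy C hC
  intro hsep
  rcases hsep with ⟨h1, h2⟩ | ⟨h1, h2⟩ <;>
    · unfold Separates at hx' hy'; by_cases hu0 : u0 ∈ C <;> tauto

lemma steiner_sep_cap {w : α → α → ℕ} {S : Finset α} {lam : ℕ}
    (hlam_min : ∀ C : Finset α, IsSteinerCut S C → lam ≤ cutCap w C)
    {W : Finset α} (hW : IsClass w S lam W)
    {X : Finset α} (hX : IsSteinerCut S X) {x y : α} (hx : x ∈ W) (hy : y ∈ W)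
    (hxX : x ∈ X) (hyX : y ∉ X) : lam + 1 ≤ cutCap w X := by
  have h1 := hlam_min X hX
  rcases eq_or_lt_of_le h1 with h2 | h2
  · exact absurd (Or.inl ⟨hxX, hyX⟩) (class_nonsep hW hx hy ⟨hX, h2.symm⟩)
  · omega

/-- For two distinct nearest cuts, the Steiner set is covered by their union. -/
lemma pair_cover {w : α → α → ℕ} (hsym : ∀ u v, w u v = w v u) {S : Finset α} {lam : ℕ}
    (hlam_min : ∀ C : Finset α, IsSteinerCut S C → lam ≤ cutCap w C)
    {W : Finset α} (hW : IsClass w S lam W)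
    {s u v : α} (hsS : s ∈ S) (hsW : s ∈ W) (hvW : v ∈ W)
    {A B : Finset α} (hA : IsNearestPlusOneCut w S lam s u A)
    (hB : IsNearestPlusOneCut w S lam s u B) (hne : A ≠ B)
    (hvA : v ∉ A) (hvB : v ∉ B) : S ⊆ A ∪ B := by
  have hcA : cutCap w A = lam + 1 := hA.1.2
  have hcB : cutCap w B = lam + 1 := hB.1.2
  have hnsubAB : ¬ A ⊆ B := fun h => hB.2.2.2 A hA.1 hA.2.1 hA.2.2.1 (h.ssubset_of_ne hne)
  have hIntSt : IsSteinerCut S (A ∩ B) := by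
    refine ⟨⟨s, ?_⟩, ?_⟩
    · simp only [Finset.mem_inter]; exact ⟨⟨hA.2.1, hB.2.1⟩, hsS⟩
    · obtain ⟨t, ht⟩ := hA.1.1.2
      rw [Finset.mem_sdiff] at ht
      exact ⟨t, by simp only [Finset.mem_sdiff, Finset.mem_inter]; tauto⟩
  have hge : lam + 1 ≤ cutCap w (A ∩ B) := by
    refine steiner_sep_cap hlam_min hW hIntSt hsW hvW ?_ ?_
    · simp only [Finset.mem_inter]; exact ⟨hA.2.1, hB.2.1⟩
    · simp only [Finset.mem_inter]; tauto
  have hne2 : cutCap w (A ∩ B) ≠ lam + 1 := by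
    intro h
    refine hA.2.2.2 (A ∩ B) ⟨hIntSt, h⟩ ?_ ?_ ?_
    · simp only [Finset.mem_inter]; exact ⟨hA.2.1, hB.2.1⟩
    · simp only [Finset.mem_inter]; exact ⟨hA.2.2.1, hB.2.2.1⟩
    · refine (Finset.inter_subset_left).ssubset_of_ne ?_
      intro h'
      exact hnsubAB (by rw [← Finset.inter_eq_left]; exact h')
  have hsub := cap_submod w hsym A B
  have hUnle : cutCap w (A ∪ B) ≤ lam := by omega
  intro t htS
  by_contra htAB
  have hUnSt : IsSteinerCut S (A ∪ B) := by
    refine ⟨⟨s, ?_⟩, ⟨t, ?_⟩⟩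
    · simp only [Finset.mem_inter, Finset.mem_union]; exact ⟨Or.inl hA.2.1, hsS⟩
    · simp only [Finset.mem_sdiff]; exact ⟨htS, htAB⟩
  have := steiner_sep_cap hlam_min hW hUnSt hsW hvW
    (by simp only [Finset.mem_union]; exact Or.inl hA.2.1)
    (by simp only [Finset.mem_union]; tauto)
  omega

/-- Zero cross-capacity between the intersection and the outside of the union. -/
lemma pair_zero {w : α → α → ℕ} (hsym : ∀ u v, w u v = w v u) {S : Finset α} {lam : ℕ}
    (hlam_min : ∀ C : Finset α, IsSteinerCut S C → lam ≤ cutCap w C)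
    {W : Finset α} (hW : IsClass w S lam W)
    {s u : α} (hsS : s ∈ S) (hsW : s ∈ W)
    {A B : Finset α} (hA : IsNearestPlusOneCut w S lam s u A)
    (hB : IsNearestPlusOneCut w S lam s u B) (hSAB : S ⊆ A ∪ B)
    {pa pb : α} (hpaW : pa ∈ W) (hpaA : pa ∈ A) (hpaB : pa ∉ B)
    (hpbW : pb ∈ W) (hpbB : pb ∈ B) (hpbA : pb ∉ A) :
    dd w (A ∩ B) ((A ∪ B)ᶜ) = 0 := by
  have hcA : cutCap w A = lam + 1 := hA.1.2
  have hcB : cutCap w B = lam + 1 := hB.1.2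
  have hAB : lam + 1 ≤ cutCap w (A \ B) := by
    obtain ⟨t, ht⟩ := hB.1.1.2
    rw [Finset.mem_sdiff] at ht
    have htA : t ∈ A := by
      have := hSAB ht.1
      rw [Finset.mem_union] at this
      tauto
    refine steiner_sep_cap hlam_min hW ⟨⟨t, ?_⟩, ⟨s, ?_⟩⟩ hpaW hsW ?_ ?_
    · simp only [Finset.mem_inter, Finset.mem_sdiff]; tauto
    · simp only [Finset.mem_sdiff]; exact ⟨hsS, by simp [hB.2.1]⟩
    · simp only [Finset.mem_sdiff]; exact ⟨hpaA, hpaB⟩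
    · simp only [Finset.mem_sdiff]; simp [hB.2.1]
  have hBA : lam + 1 ≤ cutCap w (B \ A) := by
    obtain ⟨t, ht⟩ := hA.1.1.2
    rw [Finset.mem_sdiff] at ht
    have htB : t ∈ B := by
      have := hSAB ht.1
      rw [Finset.mem_union] at this
      tauto
    refine steiner_sep_cap hlam_min hW ⟨⟨t, ?_⟩, ⟨s, ?_⟩⟩ hpbW hsW ?_ ?_
    · simp only [Finset.mem_inter, Finset.mem_sdiff]; tauto
    · simp only [Finset.mem_sdiff]; exact ⟨hsS, by simp [hA.2.1]⟩
    · simp only [Finset.mem_sdiff]; exact ⟨hpbB, hpbA⟩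
    · simp only [Finset.mem_sdiff]; simp [hA.2.1]
  have hpos := cap_posimod w hsym A B
  omega


/-- Per-index estimate: `c(A ∪ (B∩C)) ≤ 2·dd((B∩C)\A, (A∪(B∩C))ᶜ)`. -/
lemma index_fact {w : α → α → ℕ} (hsym : ∀ u v, w u v = w v u) {S : Finset α} {lam : ℕ}
    (hlam_min : ∀ C : Finset α, IsSteinerCut S C → lam ≤ cutCap w C)
    {W : Finset α} (hW : IsClass w S lam W)
    {s u : α} (hsS : s ∈ S) (hsW : s ∈ W)
    {A B C : Finset α} (hA : IsNearestPlusOneCut w S lam s u A)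
    (hSAB : S ⊆ A ∪ B) (hSAC : S ⊆ A ∪ C)
    {pa : α} (hpaW : pa ∈ W) (hpaA : pa ∉ A) (hpaB : pa ∈ B) (hpaC : pa ∈ C) :
    cutCap w (A ∪ B ∩ C) ≤ 2 * dd w ((B ∩ C) \ A) ((A ∪ B ∩ C)ᶜ) := by
  have hPSt : IsSteinerCut S ((B ∩ C) \ A) := by
    obtain ⟨t, ht⟩ := hA.1.1.2
    rw [Finset.mem_sdiff] at ht
    have htB : t ∈ B := by have := hSAB ht.1; rw [Finset.mem_union] at this; tauto
    have htC : t ∈ C := by have := hSAC ht.1; rw [Finset.mem_union] at this; tauto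
    refine ⟨⟨t, ?_⟩, ⟨s, ?_⟩⟩
    · simp only [Finset.mem_inter, Finset.mem_sdiff]; tauto
    · simp only [Finset.mem_sdiff, Finset.mem_inter]; exact ⟨hsS, by simp [hA.2.1]⟩
  have hPcap : lam + 1 ≤ cutCap w ((B ∩ C) \ A) := by
    refine steiner_sep_cap hlam_min hW hPSt hpaW hsW ?_ ?_
    · simp only [Finset.mem_sdiff, Finset.mem_inter]; tauto
    · simp only [Finset.mem_sdiff, Finset.mem_inter]; simp [hA.2.1]
  have hdisj : Disjoint ((B ∩ C) \ A) ((A ∪ B ∩ C)ᶜ) := by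
    rw [Finset.disjoint_left]; intro x hx
    simp_all only [Finset.mem_sdiff, Finset.mem_inter, Finset.mem_compl, Finset.mem_union]
    tauto
  have hdecomp : (B ∩ C) \ A ∪ (A ∪ B ∩ C)ᶜ = Aᶜ := by
    ext x
    simp only [Finset.mem_union, Finset.mem_sdiff, Finset.mem_inter, Finset.mem_compl]
    tauto
  have h1 := cap_disj w hsym hdisj
  rw [hdecomp, cutCap_compl w hsym A, cutCap_compl w hsym (A ∪ B ∩ C)] at h1
  have hcA : cutCap w A = lam + 1 := hA.1.2
  omega


-- Pure set identities, proved in a minimal context so that `tauto` is fast.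
lemma set_e01 (C0 C1 C2 : Finset α) :
    (C0 ∪ C1 ∩ C2) ∩ (C1 ∪ C0 ∩ C2) = C0 ∩ C1 ∪ C0 ∩ C2 ∪ C1 ∩ C2 := by
  ext x; simp only [Finset.mem_inter, Finset.mem_union]; tauto
lemma set_e2 (C0 C1 C2 : Finset α) :
    ((C0 ∪ C1 ∩ C2) ∪ (C1 ∪ C0 ∩ C2)) ∩ (C2 ∪ C0 ∩ C1)
      = C0 ∩ C1 ∪ C0 ∩ C2 ∪ C1 ∩ C2 := by
  ext x; simp only [Finset.mem_inter, Finset.mem_union]; tauto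
lemma set_eU (C0 C1 C2 : Finset α) :
    ((C0 ∪ C1 ∩ C2) ∪ (C1 ∪ C0 ∩ C2)) ∪ (C2 ∪ C0 ∩ C1) = C0 ∪ C1 ∪ C2 := by
  ext x; simp only [Finset.mem_inter, Finset.mem_union]; tauto
lemma set_eD (C0 C1 C2 : Finset α) :
    C0 ∩ C1 ∪ C0 ∩ C2 ∪ C1 ∩ C2
      = C0 ∩ C1 ∩ C2 ∪ ((C1 ∩ C2) \ C0 ∪ ((C0 ∩ C2) \ C1 ∪ (C0 ∩ C1) \ C2)) := by
  ext x; simp only [Finset.mem_union, Finset.mem_inter, Finset.mem_sdiff]; tauto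
lemma set_dis12 (C0 C1 C2 : Finset α) :
    Disjoint ((C0 ∩ C2) \ C1) ((C0 ∩ C1) \ C2) := by
  rw [Finset.disjoint_left]; intro x hx
  simp_all only [Finset.mem_sdiff, Finset.mem_inter]; tauto
lemma set_dis0 (C0 C1 C2 : Finset α) :
    Disjoint ((C1 ∩ C2) \ C0) ((C0 ∩ C2) \ C1 ∪ (C0 ∩ C1) \ C2) := by
  rw [Finset.disjoint_left]; intro x hx
  simp_all only [Finset.mem_sdiff, Finset.mem_inter, Finset.mem_union]; tauto
lemma set_disa (C0 C1 C2 : Finset α) :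
    Disjoint (C0 ∩ C1 ∩ C2) ((C1 ∩ C2) \ C0 ∪ ((C0 ∩ C2) \ C1 ∪ (C0 ∩ C1) \ C2)) := by
  rw [Finset.disjoint_left]; intro x hx
  simp_all only [Finset.mem_sdiff, Finset.mem_inter, Finset.mem_union]; tauto
lemma set_eDc {C0 C1 C2 Z : Finset α} (hDZ : (C0 ∩ C1 ∪ C0 ∩ C2 ∪ C1 ∩ C2) ⊆ Z) :
    (C0 ∩ C1 ∪ C0 ∩ C2 ∪ C1 ∩ C2)ᶜ
      = Zᶜ ∪ ((C0 ∩ C1 ∪ C0 ∩ C2 ∪ C1 ∩ C2)ᶜ ∩ Z) := by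
  ext y
  have : y ∈ C0 ∩ C1 ∪ C0 ∩ C2 ∪ C1 ∩ C2 → y ∈ Z := fun h => hDZ h
  simp only [Finset.mem_compl, Finset.mem_union, Finset.mem_inter] at this ⊢
  tauto
lemma set_disc (D Z : Finset α) : Disjoint (Zᶜ) (Dᶜ ∩ Z) := by
  rw [Finset.disjoint_left]; intro x hx
  simp_all only [Finset.mem_compl, Finset.mem_inter]; tauto


/-- Storing at most two nearest (λ_S+1) cuts suffices. -/
theorem storing_two_cuts_suffices
    (w : α → α → ℕ) (hsym : ∀ u v, w u v = w v u) (hdiag : ∀ u, w u u = 0)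
    (hconn : ∀ A : Finset α, A.Nonempty → A ≠ Finset.univ → 1 ≤ cutCap w A)
    (S : Finset α) (hScard : 2 ≤ S.card) (lam : ℕ)
    (hlam_ex : ∃ C : Finset α, IsSteinerCut S C ∧ cutCap w C = lam)
    (hlam_min : ∀ C : Finset α, IsSteinerCut S C → lam ≤ cutCap w C)
    (W : Finset α) (hW : IsClass w S lam W)
    (s : α) (hsS : s ∈ S) (hsW : s ∈ W) (u : α) (huW : u ∈ W)
    (C0 C1 C2 : Finset α) (h01 : C0 ≠ C1) (h02 : C0 ≠ C2) (h12 : C1 ≠ C2)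
    (hC0 : IsNearestPlusOneCut w S lam s u C0)
    (hC1 : IsNearestPlusOneCut w S lam s u C1)
    (hC2 : IsNearestPlusOneCut w S lam s u C2)
    (hout : ∃ v ∈ W, v ∉ C0 ∪ C1 ∪ C2) :
    (C0ᶜ ∩ C1 ∩ C2) ∩ W = ∅ ∨ (C1ᶜ ∩ C2 ∩ C0) ∩ W = ∅ ∨ (C2ᶜ ∩ C0 ∩ C1) ∩ W = ∅ := by
  by_contra hcon
  push_neg at hcon
  obtain ⟨hne0, hne1, hne2⟩ := hcon
  obtain ⟨v0, hv0⟩ := hne0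
  obtain ⟨v1, hv1⟩ := hne1
  obtain ⟨v2, hv2⟩ := hne2
  simp only [Finset.mem_inter, Finset.mem_compl] at hv0 hv1 hv2
  obtain ⟨⟨⟨hv0n, hv0b⟩, hv0c⟩, hv0W⟩ := hv0
  obtain ⟨⟨⟨hv1n, hv1c⟩, hv1a⟩, hv1W⟩ := hv1
  obtain ⟨⟨⟨hv2n, hv2a⟩, hv2b⟩, hv2W⟩ := hv2
  obtain ⟨v, hvW, hv⟩ := hout
  simp only [Finset.mem_union, not_or] at hv
  obtain ⟨⟨hva, hvb⟩, hvc⟩ := hv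
  -- Steiner set covered by pairwise unions
  have S01 := pair_cover hsym hlam_min hW hsS hsW hvW hC0 hC1 h01 hva hvb
  have S02 := pair_cover hsym hlam_min hW hsS hsW hvW hC0 hC2 h02 hva hvc
  have S12 := pair_cover hsym hlam_min hW hsS hsW hvW hC1 hC2 h12 hvb hvc
  have S10 := pair_cover hsym hlam_min hW hsS hsW hvW hC1 hC0 h01.symm hvb hva
  have S20 := pair_cover hsym hlam_min hW hsS hsW hvW hC2 hC0 h02.symm hvc hva
  have S21 := pair_cover hsym hlam_min hW hsS hsW hvW hC2 hC1 h12.symm hvc hvb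
  -- zero cross terms
  have z01 := pair_zero hsym hlam_min hW hsS hsW hC0 hC1 S01 hv1W hv1a hv1n hv0W hv0b hv0n
  have z02 := pair_zero hsym hlam_min hW hsS hsW hC0 hC2 S02 hv2W hv2a hv2n hv0W hv0c hv0n
  have z12 := pair_zero hsym hlam_min hW hsS hsW hC1 hC2 S12 hv2W hv2b hv2n hv1W hv1c hv1n
  have zp01 := (dd_eq_zero_iff w (C0 ∩ C1) ((C0 ∪ C1)ᶜ)).mp z01
  have zp02 := (dd_eq_zero_iff w (C0 ∩ C2) ((C0 ∪ C2)ᶜ)).mp z02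
  have zp12 := (dd_eq_zero_iff w (C1 ∩ C2) ((C1 ∪ C2)ᶜ)).mp z12
  -- index facts
  have hZ0 := index_fact hsym hlam_min hW hsS hsW hC0 S01 S02 hv0W hv0n hv0b hv0c
  have hZ1 := index_fact hsym hlam_min hW hsS hsW hC1 S10 S12 hv1W hv1n hv1a hv1c
  have hZ2 := index_fact hsym hlam_min hW hsS hsW hC2 S20 S21 hv2W hv2n hv2a hv2b
  -- submodularity chain
  have e01 := set_e01 C0 C1 C2
  have e2 := set_e2 C0 C1 C2
  have eU := set_eU C0 C1 C2
  have sub1 := cap_submod w hsym (C0 ∪ C1 ∩ C2) (C1 ∪ C0 ∩ C2)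
  have sub2 := cap_submod w hsym ((C0 ∪ C1 ∩ C2) ∪ (C1 ∪ C0 ∩ C2)) (C2 ∪ C0 ∩ C1)
  rw [e01] at sub1
  rw [e2, eU] at sub2
  -- connectivity of the union
  have cU : 1 ≤ cutCap w (C0 ∪ C1 ∪ C2) := by
    refine hconn _ ⟨s, ?_⟩ ?_
    · simp only [Finset.mem_union]; exact Or.inl (Or.inl hC0.2.1)
    · intro h
      have : v ∈ C0 ∪ C1 ∪ C2 := h ▸ Finset.mem_univ v
      simp only [Finset.mem_union] at this
      rcases this with (h | h) | h
      exacts [hva h, hvb h, hvc h]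
  -- decomposition of cutCap D
  have eD := set_eD C0 C1 C2
  have dis12 := set_dis12 C0 C1 C2
  have dis0 := set_dis0 C0 C1 C2
  have disa := set_disa C0 C1 C2
  have hsplit : dd w (C0 ∩ C1 ∩ C2 ∪ ((C1 ∩ C2) \ C0 ∪ ((C0 ∩ C2) \ C1 ∪ (C0 ∩ C1) \ C2)))
        ((C0 ∩ C1 ∪ C0 ∩ C2 ∪ C1 ∩ C2)ᶜ)
      = dd w (C0 ∩ C1 ∩ C2) ((C0 ∩ C1 ∪ C0 ∩ C2 ∪ C1 ∩ C2)ᶜ)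
        + (dd w ((C1 ∩ C2) \ C0) ((C0 ∩ C1 ∪ C0 ∩ C2 ∪ C1 ∩ C2)ᶜ)
        + (dd w ((C0 ∩ C2) \ C1) ((C0 ∩ C1 ∪ C0 ∩ C2 ∪ C1 ∩ C2)ᶜ)
        + dd w ((C0 ∩ C1) \ C2) ((C0 ∩ C1 ∪ C0 ∩ C2 ∪ C1 ∩ C2)ᶜ))) := by
    rw [dd_union_left w _ disa, dd_union_left w _ dis0, dd_union_left w _ dis12]
  rw [← eD] at hsplit
  -- membership characterization of Dᶜ
  have memD : ∀ y : α, y ∈ C0 ∩ C1 ∪ C0 ∩ C2 ∪ C1 ∩ C2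
      ↔ (y ∈ C0 ∧ y ∈ C1) ∨ (y ∈ C0 ∧ y ∈ C2) ∨ (y ∈ C1 ∧ y ∈ C2) := by
    intro y
    simp only [Finset.mem_union, Finset.mem_inter, or_assoc]
  have ha0 : dd w (C0 ∩ C1 ∩ C2) ((C0 ∩ C1 ∪ C0 ∩ C2 ∪ C1 ∩ C2)ᶜ) = 0 := by
    rw [dd_eq_zero_iff]
    intro x hx y hy
    rw [Finset.mem_inter, Finset.mem_inter] at hx
    rw [Finset.mem_compl, memD] at hy
    by_cases y0 : y ∈ C0
    · have y1 : y ∉ C1 := fun h => hy (Or.inl ⟨y0, h⟩)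
      have y2 : y ∉ C2 := fun h => hy (Or.inr (Or.inl ⟨y0, h⟩))
      exact zp12 x (by simp only [Finset.mem_inter]; exact ⟨hx.1.2, hx.2⟩) y
        (by simp only [Finset.mem_compl, Finset.mem_union]; rintro (h | h); exacts [y1 h, y2 h])
    · by_cases y1 : y ∈ C1
      · have y2 : y ∉ C2 := fun h => hy (Or.inr (Or.inr ⟨y1, h⟩))
        exact zp02 x (by simp only [Finset.mem_inter]; exact ⟨hx.1.1, hx.2⟩) y
          (by simp only [Finset.mem_compl, Finset.mem_union]; rintro (h | h); exacts [y0 h, y2 h])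
      · exact zp01 x (by simp only [Finset.mem_inter]; exact ⟨hx.1.1, hx.1.2⟩) y
          (by simp only [Finset.mem_compl, Finset.mem_union]; rintro (h | h); exacts [y0 h, y1 h])
  -- dd Pi Dᶜ = dd Pi Ziᶜ
  have hPD : ∀ (P Z : Finset α),
      (∀ x ∈ P, ∀ y ∈ (C0 ∩ C1 ∪ C0 ∩ C2 ∪ C1 ∩ C2)ᶜ ∩ Z, w x y = 0) →
      (C0 ∩ C1 ∪ C0 ∩ C2 ∪ C1 ∩ C2) ⊆ Z →
      dd w P ((C0 ∩ C1 ∪ C0 ∩ C2 ∪ C1 ∩ C2)ᶜ) = dd w P Zᶜ := by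
    intro P Z hzero hDZ
    have eDc := set_eDc hDZ
    have disc := set_disc (C0 ∩ C1 ∪ C0 ∩ C2 ∪ C1 ∩ C2) Z
    rw [show dd w P ((C0 ∩ C1 ∪ C0 ∩ C2 ∪ C1 ∩ C2)ᶜ)
        = dd w P (Zᶜ ∪ ((C0 ∩ C1 ∪ C0 ∩ C2 ∪ C1 ∩ C2)ᶜ ∩ Z)) from by rw [← eDc],
      dd_union_right w P disc]
    have hz : dd w P ((C0 ∩ C1 ∪ C0 ∩ C2 ∪ C1 ∩ C2)ᶜ ∩ Z) = 0 := by
      rw [dd_eq_zero_iff]; exact hzero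
    omega
  have hP0D : dd w ((C1 ∩ C2) \ C0) ((C0 ∩ C1 ∪ C0 ∩ C2 ∪ C1 ∩ C2)ᶜ)
      = dd w ((C1 ∩ C2) \ C0) ((C0 ∪ C1 ∩ C2)ᶜ) := by
    refine hPD _ (C0 ∪ C1 ∩ C2) ?_ ?_
    · intro x hx y hy
      rw [Finset.mem_sdiff, Finset.mem_inter] at hx
      rw [Finset.mem_inter, Finset.mem_compl, memD] at hy
      have hyZ := hy.2
      simp only [Finset.mem_union, Finset.mem_inter] at hyZ
      have y0 : y ∈ C0 := by
        rcases hyZ with h | h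
        · exact h
        · exact absurd (Or.inr (Or.inr h)) hy.1
      have y1 : y ∉ C1 := fun h => hy.1 (Or.inl ⟨y0, h⟩)
      have y2 : y ∉ C2 := fun h => hy.1 (Or.inr (Or.inl ⟨y0, h⟩))
      exact zp12 x (by simp only [Finset.mem_inter]; exact hx.1) y
        (by simp only [Finset.mem_compl, Finset.mem_union]; rintro (h | h); exacts [y1 h, y2 h])
    · intro y hy
      rw [memD] at hy
      simp only [Finset.mem_union, Finset.mem_inter]
      rcases hy with ⟨h1, h2⟩ | ⟨h1, h2⟩ | ⟨h1, h2⟩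
      exacts [Or.inl h1, Or.inl h1, Or.inr ⟨h1, h2⟩]
  have hP1D : dd w ((C0 ∩ C2) \ C1) ((C0 ∩ C1 ∪ C0 ∩ C2 ∪ C1 ∩ C2)ᶜ)
      = dd w ((C0 ∩ C2) \ C1) ((C1 ∪ C0 ∩ C2)ᶜ) := by
    refine hPD _ (C1 ∪ C0 ∩ C2) ?_ ?_
    · intro x hx y hy
      rw [Finset.mem_sdiff, Finset.mem_inter] at hx
      rw [Finset.mem_inter, Finset.mem_compl, memD] at hy
      have hyZ := hy.2
      simp only [Finset.mem_union, Finset.mem_inter] at hyZ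
      have y1 : y ∈ C1 := by
        rcases hyZ with h | h
        · exact h
        · exact absurd (Or.inr (Or.inl h)) hy.1
      have y0 : y ∉ C0 := fun h => hy.1 (Or.inl ⟨h, y1⟩)
      have y2 : y ∉ C2 := fun h => hy.1 (Or.inr (Or.inr ⟨y1, h⟩))
      exact zp02 x (by simp only [Finset.mem_inter]; exact hx.1) y
        (by simp only [Finset.mem_compl, Finset.mem_union]; rintro (h | h); exacts [y0 h, y2 h])
    · intro y hy
      rw [memD] at hy
      simp only [Finset.mem_union, Finset.mem_inter]
      rcases hy with ⟨h1, h2⟩ | ⟨h1, h2⟩ | ⟨h1, h2⟩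
      exacts [Or.inl h2, Or.inr ⟨h1, h2⟩, Or.inl h1]
  have hP2D : dd w ((C0 ∩ C1) \ C2) ((C0 ∩ C1 ∪ C0 ∩ C2 ∪ C1 ∩ C2)ᶜ)
      = dd w ((C0 ∩ C1) \ C2) ((C2 ∪ C0 ∩ C1)ᶜ) := by
    refine hPD _ (C2 ∪ C0 ∩ C1) ?_ ?_
    · intro x hx y hy
      rw [Finset.mem_sdiff, Finset.mem_inter] at hx
      rw [Finset.mem_inter, Finset.mem_compl, memD] at hy
      have hyZ := hy.2
      simp only [Finset.mem_union, Finset.mem_inter] at hyZ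
      have y2 : y ∈ C2 := by
        rcases hyZ with h | h
        · exact h
        · exact absurd (Or.inl h) hy.1
      have y0 : y ∉ C0 := fun h => hy.1 (Or.inr (Or.inl ⟨h, y2⟩))
      have y1 : y ∉ C1 := fun h => hy.1 (Or.inr (Or.inr ⟨h, y2⟩))
      exact zp01 x (by simp only [Finset.mem_inter]; exact hx.1) y
        (by simp only [Finset.mem_compl, Finset.mem_union]; rintro (h | h); exacts [y0 h, y1 h])
    · intro y hy
      rw [memD] at hy
      simp only [Finset.mem_union, Finset.mem_inter]
      rcases hy with ⟨h1, h2⟩ | ⟨h1, h2⟩ | ⟨h1, h2⟩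
      exacts [Or.inr ⟨h1, h2⟩, Or.inl h2, Or.inl h2]
  have cD : cutCap w (C0 ∩ C1 ∪ C0 ∩ C2 ∪ C1 ∩ C2)
      = dd w ((C1 ∩ C2) \ C0) ((C0 ∪ C1 ∩ C2)ᶜ)
        + dd w ((C0 ∩ C2) \ C1) ((C1 ∪ C0 ∩ C2)ᶜ)
        + dd w ((C0 ∩ C1) \ C2) ((C2 ∪ C0 ∩ C1)ᶜ) := by
    rw [cutCap_eq_dd, hsplit, ha0, hP0D, hP1D, hP2D]
    ring
  -- final arithmetic
  omega


end Paper
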